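/- Let G be a weighted graph, H ⊆ G a subgraph, α ≥ 1, and let P_{x,y} = (x = x_0, x_1, …, x_t = y) be a shortest x–y path in G. Let S = ([i_0,i_1],…,[i_{s−1},i_s]) with 0 = i_0 < i_1 < ⋯ < i_s = t be an α-segmentation of P_{x,y} with respect to H, and let H′ = H ∪ E_α(S,H). Then for every 0 ≤ ℓ < r ≤ s, dist_{H′}(x_{i_ℓ}, x_{i_r}) ≤ α · dist_G(x_{i_ℓ}, x_{i_r}). -/

import Mathlib

/- Weighted graphs: a `SimpleGraph V` together with a symmetric weight function
`w : V → V → ℝ≥0` that is positive on edges.  The weight of a walk is the sum of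
its edge weights, and `wDist G w u v` is the shortest-path distance in `G`
(`∞` if `u` and `v` are not connected). -/

open scoped ENNReal

noncomputable def walkWeight {V : Type*} {G : SimpleGraph V} (w : V → V → NNReal)
    {u v : V} (p : G.Walk u v) : ℝ≥0∞ :=
  (p.darts.map fun d => (w d.toProd.1 d.toProd.2 : ℝ≥0∞)).sum

/-- Shortest-path distance in `G` w.r.t. the weights `w`. -/
noncomputable def wDist {V : Type*} (G : SimpleGraph V) (w : V → V → NNReal) (u v : V) : ℝ≥0∞ :=
  ⨅ p : G.Walk u v, walkWeight w p

/-- `x 0, x 1, …, x t` is a shortest path in `G`: consecutive vertices are adjacent and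
the distance in `G` between any two of its vertices is the weight of the subpath
between them (every subpath of a shortest path is shortest). -/
def IsShortestPath {V : Type*} (G : SimpleGraph V) (w : V → V → NNReal)
    (t : ℕ) (x : ℕ → V) : Prop :=
  (∀ i, i < t → G.Adj (x i) (x (i + 1))) ∧
  (∀ i j, i ≤ j → j ≤ t →
    wDist G w (x i) (x j) = ∑ m ∈ Finset.Ico i j, (w (x m) (x (m + 1)) : ℝ≥0∞))

/-- An `α`-segmentation of the path `x 0, …, x t` w.r.t. `H`: indices
`0 = idx 0 < idx 1 < ⋯ < idx s = t` such that every segment of length `≥ 2`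
has stretch at most `α` in `H`. -/
def IsSeg {V : Type*} (G H : SimpleGraph V) (w : V → V → NNReal) (α : ℝ≥0∞)
    (x : ℕ → V) (t s : ℕ) (idx : ℕ → ℕ) : Prop :=
  idx 0 = 0 ∧ idx s = t ∧ (∀ j, j < s → idx j < idx (j + 1)) ∧
  (∀ j, j < s → 2 ≤ idx (j + 1) - idx j →
    wDist H w (x (idx j)) (x (idx (j + 1))) ≤ α * wDist G w (x (idx j)) (x (idx (j + 1))))

/-- A minimal `α`-segmentation: no consecutive run of segments can be merged into a
single segment while remaining an `α`-segmentation, i.e. the endpoints of any union of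
at least two consecutive segments have stretch `> α` in `H`. -/
def IsMinimalSeg {V : Type*} (G H : SimpleGraph V) (w : V → V → NNReal) (α : ℝ≥0∞)
    (x : ℕ → V) (t s : ℕ) (idx : ℕ → ℕ) : Prop :=
  IsSeg G H w α x t s idx ∧
  ∀ a b, a + 2 ≤ b → b ≤ s →
    α * wDist G w (x (idx a)) (x (idx b)) < wDist H w (x (idx a)) (x (idx b))

/-- `E_α(S,H)`: the edges corresponding to single-edge segments whose endpoints have
stretch `> α` in `H`. -/
def segEdges {V : Type*} (H : SimpleGraph V) (w : V → V → NNReal) (α : ℝ≥0∞)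
    (x : ℕ → V) (s : ℕ) (idx : ℕ → ℕ) : Set (Sym2 V) :=
  {e | ∃ j, j < s ∧ idx (j + 1) = idx j + 1 ∧
      e = s(x (idx j), x (idx j + 1)) ∧
      α * (w (x (idx j)) (x (idx j + 1)) : ℝ≥0∞) < wDist H w (x (idx j)) (x (idx j + 1))}


section AuxWDist
variable {V : Type*} {G H : SimpleGraph V} {w : V → V → NNReal} {u v : V}

lemma walkWeight_append {u v z : V} (p : G.Walk u v) (q : G.Walk v z) :
    walkWeight w (p.append q) = walkWeight w p + walkWeight w q := by
  simp [walkWeight]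

lemma wDist_le (p : G.Walk u v) : wDist G w u v ≤ walkWeight w p := iInf_le _ p

lemma wDist_triangle (u v z : V) :
    wDist G w u z ≤ wDist G w u v + wDist G w v z := by
  simp only [wDist, ENNReal.iInf_add, ENNReal.add_iInf]
  refine le_iInf fun q => le_iInf fun p => ?_
  calc wDist G w u z ≤ walkWeight w (p.append q) := wDist_le _
    _ = _ := walkWeight_append p q

lemma wDist_anti (h : G ≤ H) (u v : V) : wDist H w u v ≤ wDist G w u v := by
  refine le_iInf fun p => ?_
  calc wDist H w u v ≤ walkWeight w (p.mapLe h) := wDist_le _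
    _ = walkWeight w p := by
      simp only [walkWeight, SimpleGraph.Walk.darts_map, List.map_map]
      rfl

lemma wDist_le_of_adj (h : G.Adj u v) : wDist G w u v ≤ w u v := by
  calc wDist G w u v ≤ walkWeight w (SimpleGraph.Walk.cons h SimpleGraph.Walk.nil) := wDist_le _
    _ = w u v := by simp [walkWeight]

end AuxWDist

/-- **Lemma.** Let `H ⊆ G`, `α ≥ 1`, let `x 0, …, x t` be a shortest `x`–`y` path in `G`,
let `S` (given by `s, idx`) be an `α`-segmentation of it w.r.t. `H`, and let
`H' = H ∪ E_α(S,H)`.  Then for all `0 ≤ ℓ < r ≤ s`,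
`dist_{H'}(x_{idx ℓ}, x_{idx r}) ≤ α · dist_G(x_{idx ℓ}, x_{idx r})`. -/
theorem completion_step_stretch {V : Type*} (G H : SimpleGraph V) (hHG : H ≤ G)
    (w : V → V → NNReal)
    (hsymm : ∀ u v, w u v = w v u)
    (hpos : ∀ u v, G.Adj u v → 0 < w u v)
    (α : NNReal) (hα : 1 ≤ α)
    (t : ℕ) (x : ℕ → V) (hP : IsShortestPath G w t x)
    (s : ℕ) (idx : ℕ → ℕ) (hseg : IsSeg G H w (α : ℝ≥0∞) x t s idx)
    (H' : SimpleGraph V)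
    (hH' : H' = H ⊔ SimpleGraph.fromEdgeSet (segEdges H w (α : ℝ≥0∞) x s idx)) :
    ∀ l r, l < r → r ≤ s →
      wDist H' w (x (idx l)) (x (idx r)) ≤ (α : ℝ≥0∞) * wDist G w (x (idx l)) (x (idx r)) := by
  
  obtain ⟨hadj, hdist⟩ := hP
  obtain ⟨h0, hs, hlt, hstr⟩ := hseg
  have hHH' : H ≤ H' := by rw [hH']; exact le_sup_left
  have hαone : (1 : ℝ≥0∞) ≤ (α : ℝ≥0∞) := by exact_mod_cast hα
  -- monotonicity of idx
  have hmono : ∀ a b, a ≤ b → b ≤ s → idx a ≤ idx b := by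
    intro a b hab hbs
    induction b, hab using Nat.le_induction with
    | base => exact le_rfl
    | succ b hab ih =>
      exact le_trans (ih (by omega)) (le_of_lt (hlt b (by omega)))
  have hidxt : ∀ j, j ≤ s → idx j ≤ t := fun j hj => hs ▸ hmono j s hj le_rfl
  -- per-segment bound
  have key : ∀ j, j < s →
      wDist H' w (x (idx j)) (x (idx (j + 1))) ≤
        (α : ℝ≥0∞) * ∑ m ∈ Finset.Ico (idx j) (idx (j + 1)), (w (x m) (x (m + 1)) : ℝ≥0∞) := by
    intro j hj
    rcases Nat.lt_or_ge (idx (j + 1)) (idx j + 2) with hc | hc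
    · -- single edge segment
      have hj1 : idx (j + 1) = idx j + 1 := by have := hlt j hj; omega
      have hIco : Finset.Ico (idx j) (idx (j + 1)) = {idx j} := by
        rw [hj1]; exact Nat.Ico_succ_singleton _
      rw [hIco, Finset.sum_singleton, hj1]
      rcases le_or_gt (wDist H w (x (idx j)) (x (idx j + 1)))
          ((α : ℝ≥0∞) * (w (x (idx j)) (x (idx j + 1)) : ℝ≥0∞)) with h | h
      · exact le_trans (wDist_anti hHH' _ _) h
      · -- the edge is in segEdges
        have hedge : s(x (idx j), x (idx j + 1)) ∈ segEdges H w (α : ℝ≥0∞) x s idx :=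
          ⟨j, hj, hj1, rfl, h⟩
        have hne : x (idx j) ≠ x (idx j + 1) := by
          have : G.Adj (x (idx j)) (x (idx j + 1)) := hadj (idx j) (by
            have := hidxt (j + 1) hj; omega)
          exact this.ne
        have hadj' : H'.Adj (x (idx j)) (x (idx j + 1)) := by
          rw [hH']
          exact Or.inr ⟨hedge, hne⟩
        calc wDist H' w (x (idx j)) (x (idx j + 1)) ≤ w (x (idx j)) (x (idx j + 1)) :=
              wDist_le_of_adj hadj'
          _ ≤ (α : ℝ≥0∞) * (w (x (idx j)) (x (idx j + 1)) : ℝ≥0∞) :=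
              le_mul_of_one_le_left (by positivity) hαone
    · -- long segment
      have hle2 : 2 ≤ idx (j + 1) - idx j := by omega
      calc wDist H' w (x (idx j)) (x (idx (j + 1)))
          ≤ wDist H w (x (idx j)) (x (idx (j + 1))) := wDist_anti hHH' _ _
        _ ≤ (α : ℝ≥0∞) * wDist G w (x (idx j)) (x (idx (j + 1))) := hstr j hj hle2
        _ = _ := by
            rw [hdist (idx j) (idx (j + 1)) (le_of_lt (hlt j hj)) (hidxt (j + 1) hj)]
  -- main induction
  intro l r hlr hrs
  rw [hdist (idx l) (idx r) (hmono l r (le_of_lt hlr) hrs) (hidxt r hrs)]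
  induction r, hlr using Nat.le_induction with
  | base => exact key l (by omega)
  | succ r hlr ih =>
    have hrs' : r ≤ s := by omega
    have h1 : idx l ≤ idx r := hmono l r (le_of_lt hlr) hrs'
    have h2 : idx r ≤ idx (r + 1) := le_of_lt (hlt r (by omega))
    rw [← Finset.sum_Ico_consecutive _ h1 h2, mul_add]
    calc wDist H' w (x (idx l)) (x (idx (r + 1)))
        ≤ wDist H' w (x (idx l)) (x (idx r)) + wDist H' w (x (idx r)) (x (idx (r + 1))) :=
          wDist_triangle _ _ _
      _ ≤ _ := add_le_add (ih hrs') (key r (by omega))
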